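/- If a set 𝒯 of binary phylogenetic trees on n taxa is co-displayed in a binary tree-child network, then there exists a taxon x such that at most two distinct cherries containing x occur among the trees of 𝒯. More generally, for every integer k with 1 ≤ k ≤ n−1, the number of taxa that appear in at most k distinct cherries of 𝒯 is at least k−1. -/

import Mathlib

/-- A rooted, leaf-labeled digraph: a candidate phylogenetic network on taxon set `X`. -/
structure Net (V : Type) (X : Type) where
  E : V → V → Prop
  root : V
  leaf : X → V

namespace Net

variable {V X : Type}

/-- Indegree of a vertex. -/
noncomputable def inDeg (N : Net V X) (v : V) : ℕ := {u | N.E u v}.ncard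

/-- Outdegree of a vertex. -/
noncomputable def outDeg (N : Net V X) (v : V) : ℕ := {w | N.E v w}.ncard

def IsLeaf (N : Net V X) (v : V) : Prop := N.outDeg v = 0

/-- A tree node: indegree at most one. -/
def IsTreeNode (N : Net V X) (v : V) : Prop := N.inDeg v ≤ 1

/-- A reticulate node: indegree two (or more, in the non-binary case: indegree ≥ 2). -/
def IsRet (N : Net V X) (v : V) : Prop := 2 ≤ N.inDeg v

def Acyclic (N : Net V X) : Prop := ∀ v, ¬ Relation.TransGen N.E v v

/-- Common well-formedness conditions of a rooted phylogenetic network: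
acyclic, rooted, every node reachable from the root, leaves bijectively labeled by `X`. -/
structure IsPhylo (N : Net V X) : Prop where
  acyclic : N.Acyclic
  rootIn : N.inDeg N.root = 0
  reach : ∀ v, Relation.ReflTransGen N.E N.root v
  leafInj : Function.Injective N.leaf
  leafIsLeaf : ∀ x, N.IsLeaf (N.leaf x)
  leafSurj : ∀ v, N.IsLeaf v → ∃ x, N.leaf x = v
  leafIn : ∀ x, N.inDeg (N.leaf x) = 1

/-- A binary phylogenetic network: every non-leaf node is either a tree node
(indegree ≤ 1, outdegree 2) or a reticulate node (indegree 2, outdegree 1). -/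
structure IsBinaryNet (N : Net V X) extends IsPhylo N : Prop where
  deg : ∀ v, ¬ N.IsLeaf v →
    (N.inDeg v ≤ 1 ∧ N.outDeg v = 2) ∨ (N.inDeg v = 2 ∧ N.outDeg v = 1)

/-- Tree-child property: every non-leaf node has a child that is a tree node. -/
def TreeChild (N : Net V X) : Prop :=
  ∀ v, ¬ N.IsLeaf v → ∃ w, N.E v w ∧ N.IsTreeNode w

/-- A binary phylogenetic tree: a binary phylogenetic network without reticulate nodes. -/
def IsBinaryTree (N : Net V X) : Prop := N.IsBinaryNet ∧ ∀ v, N.inDeg v ≤ 1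

/-- A tree edge: an edge entering a tree node. -/
def TreeEdge (N : Net V X) (u v : V) : Prop := N.E u v ∧ N.IsTreeNode v

/-- The tree component rooted at `x`: all nodes reachable from `x` via tree edges. -/
def comp (N : Net V X) (x : V) : Set V := {v | Relation.ReflTransGen N.TreeEdge x v}

/-- `u` and `v` lie in a common tree component. -/
def InSameComp (N : Net V X) (u v : V) : Prop :=
  ∃ x, (x = N.root ∨ N.IsRet x) ∧ u ∈ N.comp x ∧ v ∈ N.comp x

/-- The taxa `x` and `y` form a cherry: their leaves share a common parent. -/
def HasCherry (N : Net V X) (x y : X) : Prop :=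
  x ≠ y ∧ ∃ p, N.E p (N.leaf x) ∧ N.E p (N.leaf y)

/-- The set of cherries of a tree, as unordered pairs of taxa. -/
def cherries (N : Net V X) : Set (Sym2 X) :=
  {p | ∃ x y, p = s(x, y) ∧ N.HasCherry x y}

/-- The tree has the 3-subtree `((a,b),c)`: a node whose two children are the leaf `c`
and the parent of the cherry `(a,b)`. -/
def Has3Subtree (N : Net V X) (a b c : X) : Prop :=
  a ≠ b ∧ a ≠ c ∧ b ≠ c ∧
  ∃ v p, N.E v p ∧ N.E v (N.leaf c) ∧ N.E p (N.leaf a) ∧ N.E p (N.leaf b)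

def IsAncestor (N : Net V X) (u v : V) : Prop := Relation.ReflTransGen N.E u v

/-- `l` is the least common ancestor of `u` and `v`. -/
def IsLCA (N : Net V X) (l u v : V) : Prop :=
  N.IsAncestor l u ∧ N.IsAncestor l v ∧
  ∀ w, N.IsAncestor w u → N.IsAncestor w v → N.IsAncestor w l

end Net

/-- Paths in `S` from `a` to `b` whose vertices other than `a` and `b` avoid the set `A`. -/
def pathAvoid {V : Type} (S : V → V → Prop) (A : Set V) (a b : V) : Prop :=
  Relation.ReflTransGen (fun u v => S u v ∧ (v = b ∨ v ∉ A)) a b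

/-- `T` is displayed in `N`: `N` contains a subdivision of `T` preserving the leaf labels,
i.e. `T` is obtained from `N` by deleting all but one incoming edge at each reticulate node,
pruning nodes without labeled leaf descendants, and suppressing degree-two nodes. -/
def Display {VT V X : Type} (T : Net VT X) (N : Net V X) : Prop :=
  ∃ (S : V → V → Prop) (φ : VT → V),
    (∀ u v, S u v → N.E u v) ∧
    Function.Injective φ ∧
    (∀ x, φ (T.leaf x) = N.leaf x) ∧
    (∀ a b, T.E a b → pathAvoid S (Set.range φ) (φ a) (φ b)) ∧
    (∀ a : VT, {w | S (φ a) w}.ncard = T.outDeg a ∧ {u | S u (φ a)}.ncard = T.inDeg a) ∧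
    (∀ v : V, v ∉ Set.range φ → ((∃ u, S u v) ∨ (∃ w, S v w)) →
      {w | S v w}.ncard = 1 ∧ {u | S u v}.ncard = 1)

/-- `N` displays the cherry `(x, y)`: some binary tree displayed in `N` has `(x,y)` as a cherry. -/
def DisplaysCherry {V X : Type} (N : Net V X) (x y : X) : Prop :=
  ∃ (VT : Type) (T : Net VT X),
    Finite VT ∧ T.IsBinaryTree ∧ Display T N ∧ T.HasCherry x y

/-- `N` displays the 3-subtree `((a,b),c)`. -/
def Displays3Subtree {V X : Type} (N : Net V X) (a b c : X) : Prop :=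
  ∃ (VT : Type) (T : Net VT X),
    Finite VT ∧ T.IsBinaryTree ∧ Display T N ∧ T.Has3Subtree a b c

/-- Isomorphism of leaf-labeled rooted digraphs. -/
def NetIso {V1 V2 X : Type} (N1 : Net V1 X) (N2 : Net V2 X) : Prop :=
  ∃ f : V1 ≃ V2, (∀ u v, N1.E u v ↔ N2.E (f u) (f v)) ∧
    f N1.root = N2.root ∧ ∀ x, f (N1.leaf x) = N2.leaf x

section Aux
open Relation Set

namespace Net

variable {V X : Type} {N : Net V X}

/-- Forced step: the unique way a path can continue if all its interior side
branches must be prunable (side children must be reticulations). -/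
def FStep (N : Net V X) (a b : V) : Prop :=
  N.E a b ∧ (N.IsRet a ∨ ∃ r, N.E a r ∧ r ≠ b ∧ N.IsRet r)

def FReach (N : Net V X) : V → V → Prop := Relation.ReflTransGen N.FStep

noncomputable def hgt (N : Net V X) (v : V) : ℕ := {w | Relation.TransGen N.E v w}.ncard

def CherryN (N : Net V X) (x y : X) : Prop :=
  ∃ v c1 c2, c1 ≠ c2 ∧ N.E v c1 ∧ N.E v c2 ∧
    N.FReach c1 (N.leaf x) ∧ N.FReach c2 (N.leaf y)

lemma not_isLeaf_of_edge [Fintype V] {v w : V} (h : N.E v w) : ¬ N.IsLeaf v := by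
  intro hl
  have h0 : N.outDeg v = 0 := hl
  have : ({w' | N.E v w'} : Set V).Nonempty := ⟨w, h⟩
  have := (Set.ncard_pos (Set.toFinite _)).2 this
  rw [Net.outDeg] at h0
  omega

lemma parent_unique {w q q' : V} [Fintype V] (h1 : N.inDeg w ≤ 1)
    (h2 : N.E q w) (h3 : N.E q' w) : q = q' := by
  rw [Net.inDeg] at h1
  exact (Set.ncard_le_one (Set.toFinite _)).1 h1 q h2 q' h3

lemma hgt_lt [Fintype V] (hac : N.Acyclic) {a b : V} (h : N.E a b) : N.hgt b < N.hgt a := by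
  apply Set.ncard_lt_ncard _ (Set.toFinite _)
  rw [Set.ssubset_def]
  refine ⟨fun w hw => Relation.TransGen.head h hw, fun hsub => ?_⟩
  exact hac b (hsub (Relation.TransGen.single h))

lemma hgt_le [Fintype V] (hac : N.Acyclic) {a b : V} (h : Relation.ReflTransGen N.E a b) :
    N.hgt b ≤ N.hgt a := by
  induction h with
  | refl => exact le_rfl
  | tail _ h2 ih => exact le_trans (le_of_lt (hgt_lt hac h2)) ih

lemma freach_E {a b : V} (h : N.FReach a b) : Relation.ReflTransGen N.E a b :=
  Relation.ReflTransGen.mono (fun _ _ hh => hh.1) _ _ h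

lemma indeg_le_two [Fintype V] (hN : N.IsBinaryNet) (v : V) : N.inDeg v ≤ 2 := by
  by_cases hl : N.IsLeaf v
  · obtain ⟨z, hz⟩ := hN.toIsPhylo.leafSurj v hl
    rw [← hz, hN.toIsPhylo.leafIn z]; omega
  · rcases hN.deg v hl with ⟨h, _⟩ | ⟨h, _⟩ <;> omega

lemma fstep_unique [Fintype V] (hN : N.IsBinaryNet) (htc : N.TreeChild) {a b b' : V}
    (h : N.FStep a b) (h' : N.FStep a b') : b = b' := by
  have hnl : ¬ N.IsLeaf a := not_isLeaf_of_edge h.1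
  have hout1 : N.outDeg a = 1 → b = b' := by
    intro h1
    rw [Net.outDeg] at h1
    obtain ⟨u, hu⟩ := Set.ncard_eq_one.1 h1
    have hb : b ∈ {w | N.E a w} := h.1
    have hb' : b' ∈ {w | N.E a w} := h'.1
    rw [hu] at hb hb'
    rw [hb, hb']
  rcases h.2 with hret | ⟨r, hEr, hrb, hrret⟩
  · -- a is a reticulation: outdeg 1
    rcases hN.deg a hnl with ⟨hin, _⟩ | ⟨_, hout⟩
    · have : (2 : ℕ) ≤ N.inDeg a := hret
      omega
    · exact hout1 hout
  · rcases h'.2 with hret' | ⟨r', hEr', hrb', hrret'⟩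
    · rcases hN.deg a hnl with ⟨hin, _⟩ | ⟨_, hout⟩
      · have : (2 : ℕ) ≤ N.inDeg a := hret'
        omega
      · exact hout1 hout
    · -- both sides give a reticulate sibling
      rcases hN.deg a hnl with ⟨_, hout⟩ | ⟨_, hout⟩
      swap
      · exact hout1 hout
      by_contra hbb
      rw [Net.outDeg] at hout
      obtain ⟨c, d, hcd, hset⟩ := Set.ncard_eq_two.1 hout
      have hmem : ∀ z, N.E a z → z = c ∨ z = d := by
        intro z hz
        have : z ∈ {w | N.E a w} := hz
        rw [hset] at this
        exact this
      obtain ⟨w, hEw, hwt⟩ := htc a hnl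
      have hwnr : ¬ N.IsRet w := by
        intro hr
        have h1 : (2:ℕ) ≤ N.inDeg w := hr
        have h2 : N.inDeg w ≤ 1 := hwt
        omega
      -- b and b' are the two children, so r = b' and r' = b, making both children rets
      have hr2 : r = b' := by
        rcases hmem r hEr with h1 | h1 <;> rcases hmem b h.1 with h2 | h2 <;>
          rcases hmem b' h'.1 with h3 | h3 <;> first | omega | (subst_vars; tauto)
      have hr'2 : r' = b := by
        rcases hmem r' hEr' with h1 | h1 <;> rcases hmem b h.1 with h2 | h2 <;>
          rcases hmem b' h'.1 with h3 | h3 <;> first | omega | (subst_vars; tauto)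
      rcases hmem w hEw with h1 | h1 <;> rcases hmem b h.1 with h2 | h2 <;>
        rcases hmem b' h'.1 with h3 | h3 <;> subst_vars <;> tauto

end Net
end Aux
section Aux2
open Relation Set

namespace Net

variable {V X : Type} {N : Net V X}

lemma not_fstep_ret [Fintype V] (hN : N.IsBinaryNet) (htc : N.TreeChild) {a b : V}
    (h : N.FStep a b) : ¬ N.IsRet b := by
  intro hbret
  have hnl : ¬ N.IsLeaf a := not_isLeaf_of_edge h.1
  obtain ⟨w, hEw, hwt⟩ := htc a hnl
  have hwnr : ¬ N.IsRet w := by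
    intro hr
    have h1 : (2:ℕ) ≤ N.inDeg w := hr
    have h2 : N.inDeg w ≤ 1 := hwt
    omega
  rcases h.2 with hret | ⟨r, hEr, hrb, hrret⟩
  · -- a ret: outdeg 1, single child b; but tree-child child w must equal b
    rcases hN.deg a hnl with ⟨hin, _⟩ | ⟨_, hout⟩
    · have : (2:ℕ) ≤ N.inDeg a := hret
      omega
    · rw [Net.outDeg] at hout
      obtain ⟨u, hu⟩ := Set.ncard_eq_one.1 hout
      have h1 : w ∈ {w' | N.E a w'} := hEw
      have h2 : b ∈ {w' | N.E a w'} := h.1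
      rw [hu] at h1 h2
      exact hwnr (by rw [h1, ← h2]; exact hbret)
  · -- sibling r of b is a ret, and b is a ret: both children ret, contradict tree-child
    rcases hN.deg a hnl with ⟨_, hout⟩ | ⟨_, hout⟩
    · rw [Net.outDeg] at hout
      obtain ⟨c, d, hcd, hset⟩ := Set.ncard_eq_two.1 hout
      have hmem : ∀ z, N.E a z → z = c ∨ z = d := by
        intro z hz
        have : z ∈ {w' | N.E a w'} := hz
        rw [hset] at this
        exact this
      rcases hmem w hEw with h1 | h1 <;> rcases hmem b h.1 with h2 | h2 <;>
        rcases hmem r hEr with h3 | h3 <;> subst_vars <;> tauto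
    · rw [Net.outDeg] at hout
      obtain ⟨u, hu⟩ := Set.ncard_eq_one.1 hout
      have h1 : b ∈ {w' | N.E a w'} := h.1
      have h2 : r ∈ {w' | N.E a w'} := hEr
      rw [hu] at h1 h2
      exact hrb (h2.trans h1.symm)

lemma no_edge_of_leaf [Fintype V] {b c : V} (hl : N.IsLeaf b) (h : N.E b c) : False :=
  not_isLeaf_of_edge h hl

lemma comparable_of_det {α : Type*} {r : α → α → Prop}
    (hdet : ∀ a b b', r a b → r a b' → b = b') {a b c : α}
    (h1 : Relation.ReflTransGen r a b) :
    Relation.ReflTransGen r a c → Relation.ReflTransGen r b c ∨ Relation.ReflTransGen r c b := by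
  induction h1 using Relation.ReflTransGen.head_induction_on with
  | refl => exact fun h2 => Or.inl h2
  | head h' _ ih =>
    intro h2
    rcases Relation.ReflTransGen.cases_head h2 with rfl | ⟨a2, ha2, h2'⟩
    · right
      exact Relation.ReflTransGen.head h' (by assumption)
    · have : a2 = _ := hdet _ _ _ ha2 h'
      subst this
      exact ih h2'

lemma freach_comparable [Fintype V] (hN : N.IsBinaryNet) (htc : N.TreeChild) {a b c : V}
    (h1 : N.FReach a b) (h2 : N.FReach a c) : N.FReach b c ∨ N.FReach c b :=
  comparable_of_det (r := N.FStep) (fun _ _ _ hx hy => fstep_unique hN htc hx hy) h1 h2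

lemma fstep_back_unique [Fintype V] (hN : N.IsBinaryNet) (htc : N.TreeChild) {w w' c : V}
    (h : N.FStep w c) (h' : N.FStep w' c) : w = w' := by
  by_cases hret : N.IsRet c
  · exact absurd hret (not_fstep_ret hN htc h)
  · have hin : N.inDeg c ≤ 1 := by
      rw [Net.IsRet] at hret
      omega
    exact parent_unique hin h.1 h'.1

/-- Two vertices forced-reaching the same target are comparable. -/
lemma freach_co_comparable [Fintype V] (hN : N.IsBinaryNet) (htc : N.TreeChild) {b c l : V}
    (h1 : N.FReach b l) (h2 : N.FReach c l) : N.FReach b c ∨ N.FReach c b := by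
  have h1' : Relation.ReflTransGen (Function.swap N.FStep) l b :=
    Relation.reflTransGen_swap.2 h1
  have h2' : Relation.ReflTransGen (Function.swap N.FStep) l c :=
    Relation.reflTransGen_swap.2 h2
  rcases comparable_of_det (r := Function.swap N.FStep)
      (fun _ _ _ hx hy => fstep_back_unique hN htc hx hy) h1' h2' with h | h
  · exact Or.inr (Relation.reflTransGen_swap.1 h)
  · exact Or.inl (Relation.reflTransGen_swap.1 h)

lemma freach_leaf_unique [Fintype V] (hN : N.IsBinaryNet) (htc : N.TreeChild) {a b1 b2 : V}
    (h1 : N.FReach a b1) (h2 : N.FReach a b2) (hl1 : N.IsLeaf b1) (hl2 : N.IsLeaf b2) :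
    b1 = b2 := by
  rcases freach_comparable hN htc h1 h2 with h | h
  · rcases Relation.ReflTransGen.cases_head h with h' | ⟨z, hz, _⟩
    · exact h'
    · exact absurd hz.1 (fun he => no_edge_of_leaf hl1 he)
  · rcases Relation.ReflTransGen.cases_head h with h' | ⟨z, hz, _⟩
    · exact h'.symm
    · exact absurd hz.1 (fun he => no_edge_of_leaf hl2 he)

lemma exists_top [Fintype V] (hN : N.IsBinaryNet) (htc : N.TreeChild) (x : X) :
    ∃ m, N.FReach m (N.leaf x) ∧ ∀ c, N.FReach c (N.leaf x) → N.FReach m c := by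
  classical
  have hne : ((Set.univ.toFinset.filter (fun c => N.FReach c (N.leaf x)))).Nonempty := by
    refine ⟨N.leaf x, ?_⟩
    simp [Relation.ReflTransGen.refl, Net.FReach]
  obtain ⟨m, hm, hmax⟩ := Finset.exists_max_image _ N.hgt hne
  simp only [Finset.mem_filter] at hm
  refine ⟨m, hm.2, fun c hc => ?_⟩
  rcases freach_co_comparable hN htc hm.2 hc with h | h
  · exact h
  · rcases Relation.ReflTransGen.cases_head h with heq | ⟨d, hd, hdm⟩
    · exact heq ▸ Relation.ReflTransGen.refl
    · exfalso
      have h1 : N.hgt m ≤ N.hgt d := hgt_le hN.toIsPhylo.acyclic (freach_E hdm)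
      have h2 : N.hgt d < N.hgt c := hgt_lt hN.toIsPhylo.acyclic hd.1
      have h3 : N.hgt c ≤ N.hgt m := by
        refine hmax c ?_
        simp only [Finset.mem_filter]
        exact ⟨by simp, hc⟩
      omega

open Classical in
noncomputable def topA (N : Net V X) (x : X) : V :=
  if h : ∃ m, N.FReach m (N.leaf x) ∧ ∀ c, N.FReach c (N.leaf x) → N.FReach m c
  then h.choose else N.leaf x

lemma topA_spec [Fintype V] (hN : N.IsBinaryNet) (htc : N.TreeChild) (x : X) :
    N.FReach (N.topA x) (N.leaf x) ∧
      ∀ c, N.FReach c (N.leaf x) → N.FReach (N.topA x) c := by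
  have h := exists_top hN htc x
  rw [Net.topA, dif_pos h]
  exact h.choose_spec

noncomputable def mu (N : Net V X) (x : X) : ℕ := N.hgt (N.topA x)

noncomputable def key (N : Net V X) [Fintype X] (x : X) : ℕ :=
  N.mu x * Fintype.card X + (Fintype.equivFin X x).val

lemma key_lt_of_mu_lt [Fintype X] {x y : X} (h : N.mu y < N.mu x) : N.key y < N.key x := by
  rw [Net.key, Net.key]
  have h1 : ((Fintype.equivFin X) y).val < Fintype.card X := ((Fintype.equivFin X) y).isLt
  have h2 : N.mu y + 1 ≤ N.mu x := h
  calc N.mu y * Fintype.card X + ((Fintype.equivFin X) y).val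
      < (N.mu y + 1) * Fintype.card X := by nlinarith
    _ ≤ N.mu x * Fintype.card X := Nat.mul_le_mul_right _ h2
    _ ≤ _ := Nat.le_add_right _ _

lemma key_inj [Fintype X] : Function.Injective N.key := by
  intro x y h
  have hμ : N.mu x = N.mu y := by
    by_contra hne
    rcases Nat.lt_or_ge (N.mu x) (N.mu y) with h1 | h1
    · have := key_lt_of_mu_lt (N := N) h1
      omega
    · rcases Nat.lt_or_ge (N.mu y) (N.mu x) with h2 | h2
      · have := key_lt_of_mu_lt (N := N) h2
        omega
      · omega
  rw [Net.key, Net.key, hμ] at h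
  have := Nat.add_left_cancel h
  exact (Fintype.equivFin X).injective (Fin.ext this)

lemma exists_tree_path [Fintype V] (hN : N.IsBinaryNet) (htc : N.TreeChild) (v : V) :
    ∃ l, Relation.ReflTransGen (fun a b => N.E a b ∧ N.inDeg b ≤ 1) v l ∧ N.IsLeaf l := by
  have H : ∀ n v, N.hgt v ≤ n →
      ∃ l, Relation.ReflTransGen (fun a b => N.E a b ∧ N.inDeg b ≤ 1) v l ∧ N.IsLeaf l := by
    intro n
    induction n with
    | zero =>
      intro v hv
      by_cases hl : N.IsLeaf v
      · exact ⟨v, Relation.ReflTransGen.refl, hl⟩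
      · obtain ⟨w, hw, _⟩ := htc v hl
        have := hgt_lt hN.toIsPhylo.acyclic hw
        omega
    | succ n ih =>
      intro v hv
      by_cases hl : N.IsLeaf v
      · exact ⟨v, Relation.ReflTransGen.refl, hl⟩
      · obtain ⟨w, hw, hwt⟩ := htc v hl
        have hlt := hgt_lt hN.toIsPhylo.acyclic hw
        obtain ⟨l, hp, hll⟩ := ih w (by omega)
        exact ⟨l, Relation.ReflTransGen.head ⟨hw, hwt⟩ hp, hll⟩
  exact H _ v le_rfl

end Net
end Aux2
section Aux3
open Relation Set

namespace Net

variable {V X VT : Type} {N : Net V X} {T : Net VT X} {S : V → V → Prop} {φ : VT → V}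

/-- Contradiction helper: a vertex with `S`-indegree one, whose unique `N`-parent
does not send it an `S`-edge. -/
lemma sin_contra [Fintype V] {w q : V}
    (hSE : ∀ u v, S u v → N.E u v)
    (h1 : {u | S u w}.ncard = 1) (hq : N.inDeg w ≤ 1) (hE : N.E q w) (hS : ¬ S q w) :
    False := by
  obtain ⟨q', hq'⟩ := Set.ncard_eq_one.1 h1
  have hSq' : S q' w := by
    have : q' ∈ {u | S u w} := by
      rw [hq']
      exact Set.mem_singleton _
    exact this
  have : q = q' := parent_unique hq hE (hSE _ _ hSq')
  exact hS (this ▸ hSq')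

/-- If `w` heads an all-tree-node path down to a leaf, and the edge from its unique
parent `q` into `w` is not used by the embedding, then the embedded tree's root lies
strictly below `q`. -/
lemma prop_up [Fintype V] [Finite VT] (hN : N.IsBinaryNet) (hT : T.IsBinaryTree)
    (hSE : ∀ u v, S u v → N.E u v)
    (hφleaf : ∀ x, φ (T.leaf x) = N.leaf x)
    (hdeg : ∀ a : VT, {w | S (φ a) w}.ncard = T.outDeg a ∧ {u | S u (φ a)}.ncard = T.inDeg a)
    (hsub : ∀ v : V, v ∉ Set.range φ → ((∃ u, S u v) ∨ (∃ w, S v w)) →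
      {w | S v w}.ncard = 1 ∧ {u | S u v}.ncard = 1)
    {w l : V} (hTP : Relation.ReflTransGen (fun a b => N.E a b ∧ N.inDeg b ≤ 1) w l)
    (hl : N.IsLeaf l) :
    ∀ q, N.inDeg w ≤ 1 → N.E q w → ¬ S q w → Relation.TransGen N.E q (φ T.root) := by
  induction hTP using Relation.ReflTransGen.head_induction_on with
  | refl =>
    intro q hq hEqw hSqw
    exfalso
    obtain ⟨z, hz⟩ := hN.toIsPhylo.leafSurj l hl
    have h1 : {u | S u (φ (T.leaf z))}.ncard = T.inDeg (T.leaf z) := (hdeg _).2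
    have h2 : T.inDeg (T.leaf z) = 1 := hT.1.toIsPhylo.leafIn z
    rw [hφleaf, hz, h2] at h1
    exact sin_contra hSE h1 hq hEqw hSqw
  | @head w w' hstep hTP ih =>
    intro q hq hEqw hSqw
    by_cases hS : S w w'
    · by_cases hr : w ∈ Set.range φ
      · obtain ⟨a, rfl⟩ := hr
        by_cases hroot : a = T.root
        · subst hroot
          exact Relation.TransGen.single hEqw
        · exfalso
          have hreach := hT.1.toIsPhylo.reach a
          have hpar : ∃ b, T.E b a := by
            rcases Relation.ReflTransGen.cases_tail hreach with heq | ⟨c, _, hc⟩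
            · exact absurd heq hroot
            · exact ⟨c, hc⟩
          have hin : T.inDeg a = 1 := by
            have hle : T.inDeg a ≤ 1 := hT.2 a
            have hge : 0 < T.inDeg a := by
              rw [Net.inDeg]
              exact (Set.ncard_pos (Set.toFinite _)).2 hpar
            omega
          have h1 : {u | S u (φ a)}.ncard = 1 := by
            rw [(hdeg a).2, hin]
          exact sin_contra hSE h1 hq hEqw hSqw
      · exfalso
        have := (hsub w hr (Or.inr ⟨w', hS⟩)).2
        exact sin_contra hSE this hq hEqw hSqw
    · exact Relation.TransGen.head hEqw (ih w hstep.2 hstep.1 hS)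

/-- Along an embedded path avoiding the embedded tree's vertices, every step is forced. -/
lemma path_freach [Fintype V] [Finite VT] (hN : N.IsBinaryNet) (htc : N.TreeChild)
    (hT : T.IsBinaryTree)
    (hSE : ∀ u v, S u v → N.E u v)
    (hφleaf : ∀ x, φ (T.leaf x) = N.leaf x)
    (hdeg : ∀ a : VT, {w | S (φ a) w}.ncard = T.outDeg a ∧ {u | S u (φ a)}.ncard = T.inDeg a)
    (hsub : ∀ v : V, v ∉ Set.range φ → ((∃ u, S u v) ∨ (∃ w, S v w)) →
      {w | S v w}.ncard = 1 ∧ {u | S u v}.ncard = 1)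
    {p0 : V} (hroot : Relation.ReflTransGen N.E (φ T.root) p0) {x : X} :
    ∀ c, pathAvoid S (Set.range φ) c (N.leaf x) →
      (c = N.leaf x ∨ c ∉ Set.range φ) → Relation.ReflTransGen N.E p0 c →
      N.FReach c (N.leaf x) := by
  intro c hpath
  unfold pathAvoid at hpath
  induction hpath using Relation.ReflTransGen.head_induction_on with
  | refl => exact fun _ _ => Relation.ReflTransGen.refl
  | @head c d hstep hpath2 ih =>
    intro hc hp0c
    obtain ⟨hScd, hd⟩ := hstep
    have hEcd := hSE _ _ hScd
    have hcnl : ¬ N.IsLeaf c := not_isLeaf_of_edge hEcd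
    have hcr : c ∉ Set.range φ := by
      rcases hc with hc | hc
      · exfalso
        exact hcnl (hc ▸ hN.toIsPhylo.leafIsLeaf x)
      · exact hc
    have hF : N.FStep c d := by
      refine ⟨hEcd, ?_⟩
      rcases hN.deg c hcnl with ⟨hin, hout⟩ | ⟨hin, hout⟩
      · -- tree node with two children
        right
        rw [Net.outDeg] at hout
        obtain ⟨a, b, hab, hchil⟩ := Set.ncard_eq_two.1 hout
        have hmema : N.E c a := by
          have : a ∈ {w | N.E c w} := by
            rw [hchil]
            exact Set.mem_insert _ _
          exact this
        have hmemb : N.E c b := by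
          have : b ∈ {w | N.E c w} := by
            rw [hchil]
            exact Set.mem_insert_of_mem _ rfl
          exact this
        have hdmem : d = a ∨ d = b := by
          have : d ∈ {w | N.E c w} := hEcd
          rw [hchil] at this
          exact this
        obtain ⟨w, hEw, hwd⟩ : ∃ w, N.E c w ∧ w ≠ d := by
          rcases hdmem with rfl | rfl
          · exact ⟨b, hmemb, fun h => hab h.symm⟩
          · exact ⟨a, hmema, hab⟩
        refine ⟨w, hEw, hwd, ?_⟩
        by_contra hnr
        have hwin : N.inDeg w ≤ 1 := by
          rw [Net.IsRet] at hnr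
          omega
        have hSout : {z | S c z}.ncard = 1 := (hsub c hcr (Or.inr ⟨d, hScd⟩)).1
        have hnScw : ¬ S c w := by
          intro hScw
          obtain ⟨u, hu⟩ := Set.ncard_eq_one.1 hSout
          have h1 : d ∈ {z | S c z} := hScd
          have h2 : w ∈ {z | S c z} := hScw
          rw [hu] at h1 h2
          exact hwd (h2.trans h1.symm)
        obtain ⟨l, hTP, hll⟩ := exists_tree_path hN htc w
        have htg := prop_up hN hT hSE hφleaf hdeg hsub hTP hll c hwin hEw hnScw
        exact absurd (htg.trans_left (hroot.trans hp0c)) (hN.toIsPhylo.acyclic c)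
      · -- reticulation
        left
        rw [Net.IsRet]
        omega
    exact Relation.ReflTransGen.head hF (ih hd (hp0c.tail hEcd))

lemma phi_mono (hSE : ∀ u v, S u v → N.E u v)
    (hpath : ∀ a b, T.E a b → pathAvoid S (Set.range φ) (φ a) (φ b)) :
    ∀ a b, Relation.ReflTransGen T.E a b → Relation.ReflTransGen N.E (φ a) (φ b) := by
  intro a b h
  induction h with
  | refl => exact Relation.ReflTransGen.refl
  | tail _ h2 ih =>
    exact ih.trans (Relation.ReflTransGen.mono (fun u v hh => hSE u v hh.1) _ _ (hpath _ _ h2))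

lemma cherry_necessity [Fintype V] (hN : N.IsBinaryNet) (htc : N.TreeChild)
    {VT' : Type} (T : Net VT' X) (hfinT : Finite VT') (hT : T.IsBinaryTree)
    (hdisp : Display T N) {x y : X} (hch : T.HasCherry x y) :
    N.CherryN x y := by
  haveI := hfinT
  obtain ⟨hxy, pT, hpx, hpy⟩ := hch
  obtain ⟨S, φ, hSE, hinj, hφleaf, hpath, hdeg, hsub⟩ := hdisp
  have hroot : Relation.ReflTransGen N.E (φ T.root) (φ pT) :=
    phi_mono hSE hpath _ _ (hT.1.toIsPhylo.reach pT)
  have extract : ∀ z : X, T.E pT (T.leaf z) →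
      ∃ c, S (φ pT) c ∧ N.FReach c (N.leaf z) := by
    intro z hpz
    have hP : pathAvoid S (Set.range φ) (φ pT) (N.leaf z) := by
      have := hpath _ _ hpz
      rwa [hφleaf] at this
    have hne1 : φ pT ≠ N.leaf z := by
      intro h
      rw [← hφleaf z] at h
      have := hinj h
      exact hT.1.toIsPhylo.acyclic pT (Relation.TransGen.single (by rw [this] at hpz ⊢; exact hpz))
    unfold pathAvoid at hP
    rcases Relation.ReflTransGen.cases_head hP with h | ⟨c, hs, hp⟩
    · exact absurd h hne1
    · refine ⟨c, hs.1, ?_⟩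
      exact path_freach hN htc hT hSE hφleaf hdeg hsub hroot c hp hs.2
        (Relation.ReflTransGen.single (hSE _ _ hs.1))
  obtain ⟨c1, hc1S, hc1F⟩ := extract x hpx
  obtain ⟨c2, hc2S, hc2F⟩ := extract y hpy
  refine ⟨φ pT, c1, c2, ?_, hSE _ _ hc1S, hSE _ _ hc2S, hc1F, hc2F⟩
  intro heq
  rw [heq] at hc1F
  have := freach_leaf_unique hN htc hc1F hc2F
    (hN.toIsPhylo.leafIsLeaf x) (hN.toIsPhylo.leafIsLeaf y)
  exact hxy (hN.toIsPhylo.leafInj this)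

end Net
end Aux3
section Aux4
open Relation Set

namespace Net

variable {V X : Type} {N : Net V X}

/-- If `{x,y}` is a necessity-cherry and `μ x ≤ μ y`, then `y` hangs off the top of
the forced chain of `x`. -/
lemma mem_U [Fintype V] (hN : N.IsBinaryNet) (htc : N.TreeChild) {x y : X}
    (hC : N.CherryN x y) (hμ : N.mu x ≤ N.mu y) :
    ∃ v c, N.E v (N.topA x) ∧ N.E v c ∧ c ≠ N.topA x ∧ N.FReach c (N.leaf y) := by
  obtain ⟨v, c1, c2, h12, hvc1, hvc2, hr1, hr2⟩ := hC
  obtain ⟨htopx1, htopx2⟩ := topA_spec hN htc x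
  by_cases hc1 : c1 = N.topA x
  · exact ⟨v, c2, hc1 ▸ hvc1, hvc2, fun h => h12 (hc1.trans h.symm), hr2⟩
  · exfalso
    have hreach : N.FReach (N.topA x) c1 := htopx2 c1 hr1
    rcases Relation.ReflTransGen.cases_tail hreach with heq | ⟨w, hw1, hw2⟩
    · exact hc1 heq
    · by_cases hwv : w = v
      · subst hwv
        -- w = v : FStep v c1, so the sibling c2 is a reticulation, top of A_y
        obtain ⟨hEvc1', hdisj⟩ := hw2
        have hvnl : ¬ N.IsLeaf w := not_isLeaf_of_edge hvc1
        rcases hdisj with hret | ⟨r, hEr, hrne, hrret⟩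
        · -- w reticulate: outdeg 1, contradicting two distinct children
          rcases hN.deg w hvnl with ⟨hin, _⟩ | ⟨_, hout⟩
          · have : (2:ℕ) ≤ N.inDeg w := hret
            omega
          · rw [Net.outDeg] at hout
            obtain ⟨u, hu⟩ := Set.ncard_eq_one.1 hout
            have h1 : c1 ∈ {z | N.E w z} := hvc1
            have h2 : c2 ∈ {z | N.E w z} := hvc2
            rw [hu] at h1 h2
            exact h12 (h1.trans h2.symm)
        · -- sibling reticulation r must be c2
          have hout2 : N.outDeg w = 2 := by
            rcases hN.deg w hvnl with ⟨_, hout⟩ | ⟨_, hout⟩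
            · exact hout
            · exfalso
              rw [Net.outDeg] at hout
              obtain ⟨u, hu⟩ := Set.ncard_eq_one.1 hout
              have h1 : c1 ∈ {z | N.E w z} := hvc1
              have h2 : c2 ∈ {z | N.E w z} := hvc2
              rw [hu] at h1 h2
              exact h12 (h1.trans h2.symm)
          rw [Net.outDeg] at hout2
          obtain ⟨a, b, hab, hchil⟩ := Set.ncard_eq_two.1 hout2
          have hmem : ∀ z, N.E w z → z = a ∨ z = b := by
            intro z hz
            have : z ∈ {z' | N.E w z'} := hz
            rw [hchil] at this
            exact this
          have hrc2 : r = c2 := by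
            rcases hmem r hEr with h1 | h1 <;> rcases hmem c1 hvc1 with h2 | h2 <;>
              rcases hmem c2 hvc2 with h3 | h3 <;> subst_vars <;> tauto
          subst hrc2
          -- c2 = topA y
          obtain ⟨hty1, hty2⟩ := topA_spec hN htc y
          have hc2top : r = N.topA y := by
            rcases Relation.ReflTransGen.cases_tail (hty2 r hr2) with he | ⟨w', _, hw'⟩
            · exact he
            · exact absurd hrret (not_fstep_ret hN htc hw')
          -- μ y < μ x
          have h1 : N.mu y < N.hgt w := by
            rw [Net.mu, ← hc2top]
            exact hgt_lt hN.toIsPhylo.acyclic hEr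
          have h2 : N.hgt w ≤ N.mu x := by
            rw [Net.mu]
            refine hgt_le hN.toIsPhylo.acyclic (freach_E (htopx2 w ?_))
            exact Relation.ReflTransGen.head ⟨hEvc1', Or.inr ⟨r, hEr, hrne, hrret⟩⟩ hr1
          omega
      · -- two distinct FStep-parents of c1 would force c1 reticulate
        have hc1ret : N.IsRet c1 := by
          rw [Net.IsRet, Net.inDeg]
          have : 1 < ({u | N.E u c1} : Set V).ncard := by
            rw [Set.one_lt_ncard (Set.toFinite _)]
            exact ⟨w, hw2.1, v, hvc1, hwv⟩
          omega
        exact absurd hc1ret (not_fstep_ret hN htc hw2)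

lemma ncard_U [Fintype V] [Fintype X] (hN : N.IsBinaryNet) (htc : N.TreeChild) (x : X) :
    {y : X | ∃ v c, N.E v (N.topA x) ∧ N.E v c ∧ c ≠ N.topA x ∧
      N.FReach c (N.leaf y)}.ncard ≤ 2 := by
  classical
  set t : V := N.topA x with ht
  set U : Set X := {y : X | ∃ v c, N.E v t ∧ N.E v c ∧ c ≠ t ∧ N.FReach c (N.leaf y)} with hU
  have hin2 : N.inDeg t ≤ 2 := indeg_le_two hN t
  set f : X → V := fun y =>
    if h : ∃ v c, N.E v t ∧ N.E v c ∧ c ≠ t ∧ N.FReach c (N.leaf y) then h.choose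
    else N.root with hf
  have hspec : ∀ y ∈ U, N.E (f y) t ∧ ∃ c, N.E (f y) c ∧ c ≠ t ∧ N.FReach c (N.leaf y) := by
    intro y hy
    have hy' : ∃ v c, N.E v t ∧ N.E v c ∧ c ≠ t ∧ N.FReach c (N.leaf y) := hy
    have hfy : f y = hy'.choose := by
      rw [hf]
      exact dif_pos hy'
    obtain ⟨c, hc1, hc2, hc3, hc4⟩ := hy'.choose_spec
    exact ⟨hfy ▸ hc1, c, hfy ▸ hc2, hc3, hc4⟩
  have hmap : ∀ y ∈ U, f y ∈ {v | N.E v t} := fun y hy => (hspec y hy).1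
  have hinj : Set.InjOn f U := by
    intro y1 h1 y2 h2 heq
    obtain ⟨hv1, c1, hc1, hc1t, hr1⟩ := hspec y1 h1
    obtain ⟨hv2, c2, hc2, hc2t, hr2⟩ := hspec y2 h2
    rw [heq] at hv1 hc1
    -- now both c1 c2 are children of v := f y2, both ≠ t, t also a child
    set v := f y2
    have hvnl : ¬ N.IsLeaf v := not_isLeaf_of_edge hv2
    have hcc : c1 = c2 := by
      rcases hN.deg v hvnl with ⟨_, hout⟩ | ⟨_, hout⟩
      · rw [Net.outDeg] at hout
        obtain ⟨a, b, hab, hchil⟩ := Set.ncard_eq_two.1 hout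
        have hmem : ∀ z, N.E v z → z = a ∨ z = b := by
          intro z hz
          have : z ∈ {z' | N.E v z'} := hz
          rw [hchil] at this
          exact this
        rcases hmem t hv2 with h1' | h1' <;> rcases hmem c1 hc1 with h2' | h2' <;>
          rcases hmem c2 hc2 with h3' | h3' <;> subst_vars <;> tauto
      · rw [Net.outDeg] at hout
        obtain ⟨u, hu⟩ := Set.ncard_eq_one.1 hout
        have h1' : t ∈ {z | N.E v z} := hv2
        have h2' : c1 ∈ {z | N.E v z} := hc1
        rw [hu] at h1' h2'
        exact absurd (h2'.trans h1'.symm) hc1t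
    rw [hcc] at hr1
    have := freach_leaf_unique hN htc hr1 hr2
      (hN.toIsPhylo.leafIsLeaf y1) (hN.toIsPhylo.leafIsLeaf y2)
    exact hN.toIsPhylo.leafInj this
  have h1 : U.ncard ≤ ({v | N.E v t} : Set V).ncard :=
    Set.ncard_le_ncard_of_injOn f hmap hinj (Set.toFinite _)
  have h2 : ({v | N.E v t} : Set V).ncard = N.inDeg t := rfl
  omega

/-- Downward-closed finsets of any size with respect to a key. -/
lemma exists_downclosed {X : Type} [Fintype X] (key : X → ℕ) :
    ∀ j, j ≤ Fintype.card X →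
      ∃ F : Finset X, F.card = j ∧ ∀ x ∈ F, ∀ y, key y < key x → y ∈ F := by
  classical
  intro j
  induction j with
  | zero => exact fun _ => ⟨∅, rfl, by simp⟩
  | succ j ih =>
    intro hj
    obtain ⟨F, hcard, hcl⟩ := ih (le_trans (Nat.le_succ j) hj)
    have hne : (Finset.univ \ F).Nonempty := by
      rw [Finset.sdiff_nonempty]
      intro hsub
      have := Finset.card_le_card hsub
      rw [Finset.card_univ] at this
      omega
    obtain ⟨y0, hy0, hy0min⟩ := Finset.exists_min_image (Finset.univ \ F) key hne
    have hy0F : y0 ∉ F := (Finset.mem_sdiff.1 hy0).2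
    refine ⟨insert y0 F, by rw [Finset.card_insert_of_notMem hy0F, hcard], ?_⟩
    intro x hx y hy
    rcases Finset.mem_insert.1 hx with rfl | hx
    · by_contra hyF
      have hyF' : y ∉ F := fun h => hyF (Finset.mem_insert_of_mem h)
      have : key x ≤ key y := hy0min y (Finset.mem_sdiff.2 ⟨Finset.mem_univ _, hyF'⟩)
      omega
    · exact Finset.mem_insert_of_mem (hcl x hx y hy)

end Net
end Aux4
/-- If a set of binary trees on `n` taxa is co-displayed in a binary tree-child network, then
some taxon appears in at most two distinct cherries of the trees; more generally, for every
`1 ≤ k ≤ n - 1`, at least `k - 1` taxa appear in at most `k` distinct cherries. -/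
theorem stmt_13 {V X : Type} [Fintype V] [Fintype X] (N : Net V X)
    (hN : N.IsBinaryNet) (htc : N.TreeChild)
    (ι : Type) (VT : ι → Type) (Ts : ∀ i, Net (VT i) X)
    (hfin : ∀ i, Finite (VT i)) (htree : ∀ i, (Ts i).IsBinaryTree)
    (hdisp : ∀ i, Display (Ts i) N) :
    (∃ x : X, {p : Sym2 X | (∃ i, p ∈ Net.cherries (Ts i)) ∧ x ∈ p}.ncard ≤ 2) ∧
    ∀ k : ℕ, 1 ≤ k → k ≤ Fintype.card X - 1 →
      k - 1 ≤ {x : X |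
        {p : Sym2 X | (∃ i, p ∈ Net.cherries (Ts i)) ∧ x ∈ p}.ncard ≤ k}.ncard := by
  classical
  set Adj : X → X → Prop := fun x y => ∃ i, s(x, y) ∈ Net.cherries (Ts i) with hAdjdef
  have hAdjC : ∀ x y, Adj x y → ∃ i, (Ts i).HasCherry x y := by
    rintro x y ⟨i, hp⟩
    obtain ⟨x', y', heq, hch⟩ := hp
    rcases Sym2.eq_iff.1 heq with ⟨rfl, rfl⟩ | ⟨rfl, rfl⟩
    · exact ⟨i, hch⟩
    · obtain ⟨hne, p, h1, h2⟩ := hch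
      exact ⟨i, hne.symm, p, h2, h1⟩
  have hAdjne : ∀ x y, Adj x y → x ≠ y := by
    intro x y hy
    obtain ⟨i, hch⟩ := hAdjC x y hy
    exact hch.1
  -- translate incident-cherry counting into neighbour counting
  have hd : ∀ x : X, {p : Sym2 X | (∃ i, p ∈ Net.cherries (Ts i)) ∧ x ∈ p}.ncard
      = {y | Adj x y}.ncard := by
    intro x
    have himg : {p : Sym2 X | (∃ i, p ∈ Net.cherries (Ts i)) ∧ x ∈ p}
        = (fun y => s(x, y)) '' {y | Adj x y} := by
      ext p
      simp only [Set.mem_setOf_eq, Set.mem_image]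
      constructor
      · rintro ⟨hex, hxp⟩
        induction p using Sym2.ind with
        | _ a b =>
          rcases Sym2.mem_iff.1 hxp with rfl | rfl
          · exact ⟨b, hex, rfl⟩
          · refine ⟨a, ?_, by rw [Sym2.eq_swap]⟩
            show ∃ i, s(x, a) ∈ Net.cherries (Ts i)
            rw [Sym2.eq_swap]
            exact hex
      · rintro ⟨y, hy, rfl⟩
        exact ⟨hy, by simp⟩
    rw [himg]
    apply Set.ncard_image_of_injOn
    intro y1 h1 y2 h2 heq
    rcases Sym2.eq_iff.1 heq with ⟨_, h⟩ | ⟨hx, h⟩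
    · exact h
    · exact h.trans hx
  -- the key upper bound
  have hup : ∀ x : X, {y | Adj x y}.ncard ≤ {y | N.key y < N.key x}.ncard + 2 := by
    intro x
    have hsub : {y | Adj x y} ⊆ {y | N.key y < N.key x} ∪
        {y : X | ∃ v c, N.E v (N.topA x) ∧ N.E v c ∧ c ≠ N.topA x ∧
          N.FReach c (N.leaf y)} := by
      intro y hy
      rcases lt_trichotomy (N.key y) (N.key x) with h | h | h
      · exact Or.inl h
      · exact absurd (Net.key_inj h) (fun he => hAdjne x y hy he.symm)
      · refine Or.inr ?_
        have hC : N.CherryN x y := by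
          obtain ⟨i, hch⟩ := hAdjC x y hy
          exact Net.cherry_necessity hN htc (Ts i) (hfin i) (htree i) (hdisp i) hch
        refine Net.mem_U hN htc hC ?_
        by_contra h'
        have := Net.key_lt_of_mu_lt (N := N) (x := x) (y := y) (by omega)
        omega
    calc {y | Adj x y}.ncard
        ≤ ({y | N.key y < N.key x} ∪ _).ncard := Set.ncard_le_ncard hsub (Set.toFinite _)
      _ ≤ {y | N.key y < N.key x}.ncard + _ := Set.ncard_union_le _ _
      _ ≤ {y | N.key y < N.key x}.ncard + 2 := by
          have := Net.ncard_U hN htc (x := x)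
          omega
  have hXne : 1 ≤ Fintype.card X := by
    obtain ⟨l, _, hl⟩ := Net.exists_tree_path hN htc N.root
    obtain ⟨x0, _⟩ := hN.toIsPhylo.leafSurj l hl
    exact Fintype.card_pos_iff.2 ⟨x0⟩
  constructor
  · -- part 1
    obtain ⟨F, hF1, hFcl⟩ := Net.exists_downclosed N.key 1 hXne
    obtain ⟨x, hx⟩ := Finset.card_eq_one.1 hF1
    refine ⟨x, ?_⟩
    rw [hd x]
    have hzero : {y | N.key y < N.key x} = (∅ : Set X) := by
      ext y
      simp only [Set.mem_setOf_eq, Set.mem_empty_iff_false, iff_false]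
      intro h
      have : y ∈ F := hFcl x (by rw [hx]; exact Finset.mem_singleton_self x) y h
      rw [hx, Finset.mem_singleton] at this
      rw [this] at h
      exact lt_irrefl _ h
    have := hup x
    rw [hzero, Set.ncard_empty] at this
    omega
  · -- part 2
    intro k hk1 hk2
    by_cases hk : k = 1
    · subst hk
      simp
    have hkX : k - 1 ≤ Fintype.card X := by omega
    obtain ⟨F, hFc, hFcl⟩ := Net.exists_downclosed N.key (k - 1) hkX
    have hsub2 : (↑F : Set X) ⊆ {x : X |
        {p : Sym2 X | (∃ i, p ∈ Net.cherries (Ts i)) ∧ x ∈ p}.ncard ≤ k} := by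
      intro x hx
      have hxF : x ∈ F := hx
      have hsm : {y | N.key y < N.key x} ⊆ (↑(F.erase x) : Set X) := by
        intro y hy
        simp only [Set.mem_setOf_eq] at hy
        have hyF : y ∈ F := hFcl x hxF y hy
        have hyx : y ≠ x := by
          intro he
          rw [he] at hy
          exact absurd hy (lt_irrefl _)
        exact Finset.mem_erase.2 ⟨hyx, hyF⟩
      have h1 : {y | N.key y < N.key x}.ncard ≤ (F.erase x).card := by
        have := Set.ncard_le_ncard hsm (Set.toFinite _)
        rwa [Set.ncard_coe_finset] at this
      have h2 : (F.erase x).card = k - 2 := by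
        rw [Finset.card_erase_of_mem hxF, hFc]
        omega
      have h3 := hup x
      have h4 := hd x
      simp only [Set.mem_setOf_eq]
      omega
    calc (k - 1 : ℕ) = F.card := hFc.symm
      _ = (↑F : Set X).ncard := (Set.ncard_coe_finset F).symm
      _ ≤ _ := Set.ncard_le_ncard hsub2 (Set.toFinite _)
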